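/- If a concept class 𝒞 of universally measurable subsets of a domain Ω is distribution-free PAC learnable, then 𝒞 has finite VC dimension. -/

import Mathlib

open MeasureTheory Set
open scoped ENNReal

set_option maxHeartbeats 1000000

def Shatters {Ω : Type*} (𝒞 : Set (Set Ω)) (F : Finset Ω) : Prop :=
  ∀ T ⊆ F, ∃ C ∈ 𝒞, C ∩ (F : Set Ω) = (T : Set Ω)

/-- Blumer–Ehrenfeucht–Haussler–Warmuth lower bound: a class of
universally measurable sets that is distribution-free PAC learnable has finite
VC dimension. -/
theorem finite_vc_of_pac_learnable {Ω : Type*} [MeasurableSpace Ω]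
    (𝒞 : Set (Set Ω))
    (hum : ∀ C ∈ 𝒞, ∀ μ : Measure Ω, IsProbabilityMeasure μ → NullMeasurableSet C μ)
    (L : (n : ℕ) → (Fin n → Ω) → (Fin n → Prop) → Set Ω)
    (hrange : ∀ (n : ℕ) (σ : Fin n → Ω), ∀ C ∈ 𝒞, L n σ (fun i => σ i ∈ C) ∈ 𝒞)
    (hPAC : ∀ ε : ℝ, 0 < ε → ∀ δ : ℝ, 0 < δ → ∃ N : ℕ, ∀ n : ℕ, N ≤ n →
      ∀ μ : Measure Ω, IsProbabilityMeasure μ → ∀ C ∈ 𝒞,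
        (Measure.pi fun _ : Fin n => μ)
          {σ : Fin n → Ω | ε < (μ (symmDiff (L n σ fun i => σ i ∈ C) C)).toReal} ≤
          ENNReal.ofReal δ) :
    ∃ d : ℕ, ∀ F : Finset Ω, Shatters 𝒞 F → F.card ≤ d := by
  classical
  by_contra hcon
  push_neg at hcon
  obtain ⟨N, hN⟩ := hPAC (1/4) (by norm_num) (1/16) (by norm_num)
  obtain ⟨F, hF, hFcard⟩ := hcon (4 * N)
  set m := F.card with hmdef
  have hm : 4 * N < m := hFcard
  have hm0 : 0 < m := lt_of_le_of_lt (Nat.zero_le _) hm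
  have hmR : (4 * N : ℝ) + 1 ≤ (m : ℝ) := by exact_mod_cast hm
  have hmR0 : (0 : ℝ) < (m : ℝ) := by exact_mod_cast hm0
  -- the embedding of `Fin m` into the shattered set
  set e : Fin m → Ω := fun i => ((F.equivFin.symm i : ↥F) : Ω) with hedef
  have he_inj : Function.Injective e := by
    intro i j hij
    have : (F.equivFin.symm i : ↥F) = F.equivFin.symm j := Subtype.ext hij
    exact F.equivFin.symm.injective this
  have he_mem : ∀ i, e i ∈ F := fun i => (F.equivFin.symm i).2
  have he : Measurable e := measurable_from_top
  -- choose the target concepts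
  have hchoice : ∀ S : Finset (Fin m), ∃ C ∈ 𝒞, C ∩ (F : Set Ω) = ((S.image e : Finset Ω) : Set Ω) := by
    intro S
    exact hF (S.image e) (Finset.image_subset_iff.2 fun i _ => he_mem i)
  choose CC hCC1 hCC2 using hchoice
  have hmemCC : ∀ (S : Finset (Fin m)) (i : Fin m), e i ∈ CC S ↔ i ∈ S := by
    intro S i
    constructor
    · intro h
      have h2 : e i ∈ CC S ∩ (F : Set Ω) := ⟨h, he_mem i⟩
      rw [hCC2 S] at h2
      rw [Finset.coe_image] at h2
      obtain ⟨j, hj, hji⟩ := h2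
      rwa [← he_inj hji]
    · intro h
      have h2 : e i ∈ ((S.image e : Finset Ω) : Set Ω) := by
        rw [Finset.coe_image]; exact ⟨i, h, rfl⟩
      rw [← hCC2 S] at h2
      exact h2.1
  -- the uniform measure
  set ν : Measure (Fin m) := (m : ℝ≥0∞)⁻¹ • Measure.count with hνdef
  have hmE0 : (m : ℝ≥0∞) ≠ 0 := by exact_mod_cast hm0.ne'
  have hmET : (m : ℝ≥0∞) ≠ ⊤ := ENNReal.natCast_ne_top m
  have hprobν : IsProbabilityMeasure ν := by
    constructor
    rw [hνdef, Measure.smul_apply, Measure.count_univ, ENat.card_eq_coe_fintype_card, Fintype.card_fin, smul_eq_mul]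
    push_cast
    exact ENNReal.inv_mul_cancel hmE0 hmET
  set μ : Measure Ω := ν.map e with hμdef
  have hprobμ : IsProbabilityMeasure μ := Measure.isProbabilityMeasure_map he.aemeasurable
  -- lower bound for μ of arbitrary sets
  have hlow : ∀ (W : Set Ω) (d : Finset (Fin m)), (∀ i ∈ d, e i ∈ W) →
      (d.card : ℝ≥0∞) * (m : ℝ≥0∞)⁻¹ ≤ μ W := by
    intro W d hd
    have h1 : ν (d : Set (Fin m)) = (d.card : ℝ≥0∞) * (m : ℝ≥0∞)⁻¹ := by
      rw [hνdef, Measure.smul_apply, Measure.count_apply_finset, smul_eq_mul, mul_comm]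
    calc (d.card : ℝ≥0∞) * (m : ℝ≥0∞)⁻¹ = ν (d : Set (Fin m)) := h1.symm
      _ ≤ ν (e ⁻¹' W) := measure_mono (fun i hi => hd i hi)
      _ ≤ μ W := Measure.le_map_apply he.aemeasurable W
  -- hypotheses and disagreement sets
  set H : Finset (Fin m) → (Fin N → Fin m) → Set Ω :=
    fun S v => L N (fun i => e (v i)) (fun i => e (v i) ∈ CC S) with hHdef
  set D : Finset (Fin m) → (Fin N → Fin m) → Finset (Fin m) :=
    fun S v => Finset.univ.filter (fun x => ¬ (e x ∈ H S v ↔ x ∈ S)) with hDdef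
  set errR : Finset (Fin m) → (Fin N → Fin m) → ℝ :=
    fun S v => (μ (symmDiff (H S v) (CC S))).toReal with herrdef
  have herr_le1 : ∀ S v, errR S v ≤ 1 := by
    intro S v
    have h1 : μ (symmDiff (H S v) (CC S)) ≤ 1 := prob_le_one
    have := ENNReal.toReal_mono (by norm_num) h1
    simpa using this
  have herr_nonneg : ∀ S v, 0 ≤ errR S v := fun S v => ENNReal.toReal_nonneg
  have herr_ge : ∀ S v, ((D S v).card : ℝ) / m ≤ errR S v := by
    intro S v
    have hd : ∀ i ∈ D S v, e i ∈ symmDiff (H S v) (CC S) := by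
      intro i hi
      rw [hDdef] at hi
      simp only [Finset.mem_filter, Finset.mem_univ, true_and] at hi
      rw [Set.mem_symmDiff]
      have := hmemCC S i
      tauto
    have h1 := hlow _ (D S v) hd
    have h2 := ENNReal.toReal_mono (measure_ne_top μ _) h1
    rw [ENNReal.toReal_mul, ENNReal.toReal_inv] at h2
    simpa [div_eq_mul_inv] using h2
  -- pairing argument
  have hpair : ∀ (v : Fin N → Fin m) (x : Fin m), x ∉ Finset.image v Finset.univ →
      ∀ S : Finset (Fin m), x ∈ D S v ∨ x ∈ D (symmDiff S {x}) v := by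
    intro v x hx S
    have hvne : ∀ i, v i ≠ x := by
      intro i hvi
      exact hx (Finset.mem_image.2 ⟨i, Finset.mem_univ i, hvi⟩)
    have hlab : (fun i => e (v i) ∈ CC S) = (fun i => e (v i) ∈ CC (symmDiff S {x})) := by
      funext i
      apply propext
      rw [hmemCC, hmemCC, Finset.mem_symmDiff, Finset.mem_singleton]
      have := hvne i
      tauto
    have hHeq : H S v = H (symmDiff S {x}) v := by
      simp only [hHdef]
      rw [hlab]
    have hxS : x ∈ symmDiff S {x} ↔ ¬ x ∈ S := by
      rw [Finset.mem_symmDiff, Finset.mem_singleton]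
      tauto
    by_cases hc : e x ∈ H S v ↔ x ∈ S
    · right
      rw [hDdef]
      simp only [Finset.mem_filter, Finset.mem_univ, true_and]
      rw [← hHeq, hxS]
      tauto
    · left
      rw [hDdef]
      simp only [Finset.mem_filter, Finset.mem_univ, true_and]
      exact hc
  -- counting
  have hcard_finsets : (Finset.univ : Finset (Finset (Fin m))).card = 2 ^ m := by
    rw [Finset.card_univ, Fintype.card_finset, Fintype.card_fin]
  have hcard_fun : (Finset.univ : Finset (Fin N → Fin m)).card = m ^ N := by
    rw [Finset.card_univ, Fintype.card_fun, Fintype.card_fin, Fintype.card_fin]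
  -- step 1: for unseen x, at least half the concepts disagree at x
  have hstep1 : ∀ (v : Fin N → Fin m) (x : Fin m), x ∉ Finset.image v Finset.univ →
      (2 : ℝ) ^ m ≤ 2 * ∑ S : Finset (Fin m), (if x ∈ D S v then (1 : ℝ) else 0) := by
    intro v x hx
    have hbij : Function.Bijective (fun S : Finset (Fin m) => symmDiff S {x}) := by
      apply Function.Involutive.bijective
      intro S
      exact symmDiff_symmDiff_cancel_right {x} S
    have hswap : ∑ S : Finset (Fin m), (if x ∈ D (symmDiff S {x}) v then (1 : ℝ) else 0)
        = ∑ S : Finset (Fin m), (if x ∈ D S v then (1 : ℝ) else 0) :=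
      Fintype.sum_bijective _ hbij _ _ (fun S => rfl)
    have hone : ∀ S : Finset (Fin m), (1 : ℝ) ≤
        (if x ∈ D S v then (1 : ℝ) else 0) + (if x ∈ D (symmDiff S {x}) v then (1 : ℝ) else 0) := by
      intro S
      rcases hpair v x hx S with h | h <;> simp [h] <;> positivity
    calc (2 : ℝ) ^ m = ∑ _S : Finset (Fin m), (1 : ℝ) := by
          rw [Finset.sum_const, hcard_finsets]; simp
      _ ≤ ∑ S : Finset (Fin m), ((if x ∈ D S v then (1 : ℝ) else 0)
            + (if x ∈ D (symmDiff S {x}) v then (1 : ℝ) else 0)) :=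
          Finset.sum_le_sum (fun S _ => hone S)
      _ = 2 * ∑ S : Finset (Fin m), (if x ∈ D S v then (1 : ℝ) else 0) := by
          rw [Finset.sum_add_distrib, hswap]; ring
  -- card of D as a sum of indicators
  have hcard_ind : ∀ S v, ((D S v).card : ℝ) = ∑ x : Fin m, (if x ∈ D S v then (1 : ℝ) else 0) := by
    intro S v
    rw [Finset.sum_boole, Finset.filter_mem_eq_inter, Finset.univ_inter]
  -- step 2: per sample lower bound
  have hstep2 : ∀ v : Fin N → Fin m,
      ((m : ℝ) - N) * 2 ^ m ≤ 2 * ∑ S : Finset (Fin m), ((D S v).card : ℝ) := by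
    intro v
    have himg : (Finset.image v Finset.univ).card ≤ N := by
      calc (Finset.image v Finset.univ).card ≤ (Finset.univ : Finset (Fin N)).card :=
            Finset.card_image_le
        _ = N := by rw [Finset.card_univ, Fintype.card_fin]
    have hNle : N ≤ m := by omega
    have hsdiff : ((m : ℝ) - N) ≤ ((Finset.univ \ Finset.image v Finset.univ).card : ℝ) := by
      rw [Finset.card_sdiff_of_subset (Finset.subset_univ _), Finset.card_univ, Fintype.card_fin]
      have himgle : (Finset.image v Finset.univ).card ≤ m := le_trans himg hNle
      rw [Nat.cast_sub himgle]
      have : ((Finset.image v Finset.univ).card : ℝ) ≤ (N : ℝ) := by exact_mod_cast himg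
      linarith
    calc ((m : ℝ) - N) * 2 ^ m
        ≤ ((Finset.univ \ Finset.image v Finset.univ).card : ℝ) * 2 ^ m := by
          apply mul_le_mul_of_nonneg_right hsdiff; positivity
      _ = ∑ _x ∈ Finset.univ \ Finset.image v Finset.univ, (2 : ℝ) ^ m := by
          rw [Finset.sum_const]; simp [mul_comm]
      _ ≤ ∑ x ∈ Finset.univ \ Finset.image v Finset.univ,
            2 * ∑ S : Finset (Fin m), (if x ∈ D S v then (1 : ℝ) else 0) := by
          apply Finset.sum_le_sum
          intro x hxmem
          exact hstep1 v x (Finset.mem_sdiff.1 hxmem).2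
      _ ≤ ∑ x : Fin m, 2 * ∑ S : Finset (Fin m), (if x ∈ D S v then (1 : ℝ) else 0) := by
          apply Finset.sum_le_sum_of_subset_of_nonneg (Finset.subset_univ _)
          intro x _ _
          positivity
      _ = 2 * ∑ S : Finset (Fin m), ((D S v).card : ℝ) := by
          rw [← Finset.mul_sum, Finset.sum_comm]
          congr 1
          exact Finset.sum_congr rfl (fun S _ => (hcard_ind S v).symm)
  -- step 3: total lower bound
  have hstep3 : (m : ℝ) ^ N * ((m : ℝ) - N) * 2 ^ m
      ≤ 2 * ∑ S : Finset (Fin m), ∑ v : Fin N → Fin m, ((D S v).card : ℝ) := by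
    rw [Finset.sum_comm, Finset.mul_sum]
    calc (m : ℝ) ^ N * ((m : ℝ) - N) * 2 ^ m
        = ∑ _v : Fin N → Fin m, ((m : ℝ) - N) * 2 ^ m := by
          rw [Finset.sum_const, hcard_fun]
          push_cast
          ring
      _ ≤ ∑ v : Fin N → Fin m, 2 * ∑ S : Finset (Fin m), ((D S v).card : ℝ) :=
          Finset.sum_le_sum (fun v _ => hstep2 v)
  -- step 4: a good concept exists
  have hstep4 : ∃ S₀ : Finset (Fin m),
      (m : ℝ) ^ N * ((m : ℝ) - N) / 2 ≤ ∑ v : Fin N → Fin m, ((D S₀ v).card : ℝ) := by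
    by_contra hno
    push_neg at hno
    have hlt : ∑ S : Finset (Fin m), ∑ v : Fin N → Fin m, ((D S v).card : ℝ)
        < ∑ _S : Finset (Fin m), (m : ℝ) ^ N * ((m : ℝ) - N) / 2 :=
      Finset.sum_lt_sum_of_nonempty (Finset.univ_nonempty) (fun S _ => hno S)
    rw [Finset.sum_const, hcard_finsets] at hlt
    simp only [nsmul_eq_mul] at hlt
    push_cast at hlt
    have h2m : (0 : ℝ) < 2 ^ m := by positivity
    nlinarith [hstep3]
  obtain ⟨S₀, hS₀⟩ := hstep4
  -- step 5: Markov
  set B : Finset (Fin N → Fin m) :=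
    Finset.univ.filter (fun v => (1/4 : ℝ) < errR S₀ v) with hBdef
  have hmarkov : ((m : ℝ) ^ N) ≤ 8 * B.card := by
    have hsum_ge : (m : ℝ) ^ N * ((m : ℝ) - N) / (2 * m) ≤ ∑ v : Fin N → Fin m, errR S₀ v := by
      have h1 : ∑ v : Fin N → Fin m, ((D S₀ v).card : ℝ) / m ≤ ∑ v : Fin N → Fin m, errR S₀ v :=
        Finset.sum_le_sum (fun v _ => herr_ge S₀ v)
      rw [← Finset.sum_div] at h1
      have h2 : (m : ℝ) ^ N * ((m : ℝ) - N) / (2 * m)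
          ≤ (∑ v : Fin N → Fin m, ((D S₀ v).card : ℝ)) / m := by
        rw [div_le_div_iff₀ (by positivity) hmR0]
        calc (m : ℝ) ^ N * ((m : ℝ) - N) * (m : ℝ)
            = ((m : ℝ) ^ N * ((m : ℝ) - N) / 2) * (2 * m) := by ring
          _ ≤ (∑ v : Fin N → Fin m, ((D S₀ v).card : ℝ)) * (2 * m) := by
              apply mul_le_mul_of_nonneg_right hS₀; positivity
      linarith
    have hsum_le : ∑ v : Fin N → Fin m, errR S₀ v ≤ (B.card : ℝ) + (m : ℝ) ^ N / 4 := by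
      rw [← Finset.sum_filter_add_sum_filter_not Finset.univ (fun v => (1/4 : ℝ) < errR S₀ v)]
      have hb1 : ∑ v ∈ Finset.univ.filter (fun v => (1/4 : ℝ) < errR S₀ v), errR S₀ v
          ≤ (B.card : ℝ) := by
        calc ∑ v ∈ Finset.univ.filter (fun v => (1/4 : ℝ) < errR S₀ v), errR S₀ v
            ≤ ∑ _v ∈ Finset.univ.filter (fun v => (1/4 : ℝ) < errR S₀ v), (1 : ℝ) :=
              Finset.sum_le_sum (fun v _ => herr_le1 S₀ v)
          _ = (B.card : ℝ) := by rw [Finset.sum_const]; simp [hBdef]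
      have hb2 : ∑ v ∈ Finset.univ.filter (fun v => ¬ ((1/4 : ℝ) < errR S₀ v)), errR S₀ v
          ≤ (m : ℝ) ^ N / 4 := by
        calc ∑ v ∈ Finset.univ.filter (fun v => ¬ ((1/4 : ℝ) < errR S₀ v)), errR S₀ v
            ≤ ∑ _v ∈ Finset.univ.filter (fun v => ¬ ((1/4 : ℝ) < errR S₀ v)), (1/4 : ℝ) :=
              Finset.sum_le_sum (fun v hv => by
                have := (Finset.mem_filter.1 hv).2
                linarith [not_lt.1 this])
          _ = ((Finset.univ.filter (fun v => ¬ ((1/4 : ℝ) < errR S₀ v))).card : ℝ) * (1/4) := by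
              rw [Finset.sum_const]; simp
          _ ≤ ((m : ℝ) ^ N) * (1/4) := by
              apply mul_le_mul_of_nonneg_right _ (by norm_num)
              have : (Finset.univ.filter (fun v => ¬ ((1/4 : ℝ) < errR S₀ v))).card
                  ≤ (Finset.univ : Finset (Fin N → Fin m)).card :=
                Finset.card_le_card (Finset.filter_subset _ _)
              rw [hcard_fun] at this
              exact_mod_cast this
          _ = (m : ℝ) ^ N / 4 := by ring
      linarith
    -- combine: m^N (m - N) / (2m) - m^N/4 ≥ m^N/8 since m ≥ 4N+1
    have hmN : (0 : ℝ) < (m : ℝ) ^ N := by positivity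
    have hkey : (m : ℝ) ^ N / 8 ≤ (m : ℝ) ^ N * ((m : ℝ) - N) / (2 * m) - (m : ℝ) ^ N / 4 := by
      rw [le_sub_iff_add_le, div_add_div _ _ (by norm_num) (by norm_num : (4:ℝ) ≠ 0),
        div_le_div_iff₀ (by norm_num) (by positivity)]
      have hNR : (0:ℝ) ≤ (N : ℝ) := Nat.cast_nonneg N
      nlinarith
    have : (m : ℝ) ^ N / 8 ≤ (B.card : ℝ) := by linarith
    linarith
  have hmarkovN : m ^ N ≤ 8 * B.card := by exact_mod_cast hmarkov
  -- measure-theoretic conclusion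
  have hMPe : MeasurePreserving e ν μ := ⟨he, rfl⟩
  have hsf : SigmaFinite μ := by
    have := hprobμ
    infer_instance
  have hMP : MeasurePreserving (fun v : Fin N → Fin m => fun i => e (v i))
      (Measure.pi fun _ => ν) (Measure.pi fun _ => μ) :=
    measurePreserving_pi _ _ (fun _ => hMPe)
  set Bad : Set (Fin N → Ω) :=
    {σ : Fin N → Ω | (1/4 : ℝ) < (μ (symmDiff (L N σ fun i => σ i ∈ CC S₀) (CC S₀))).toReal}
    with hBaddef
  have hupper : (Measure.pi fun _ : Fin N => μ) Bad ≤ ENNReal.ofReal (1/16) :=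
    hN N le_rfl μ hprobμ (CC S₀) (hCC1 S₀)
  -- lower bound on the bad-event probability
  have hsingle : ∀ v : Fin N → Fin m, (Measure.pi fun _ : Fin N => ν) {v} = ((m : ℝ≥0∞) ^ N)⁻¹ := by
    intro v
    rw [← Set.univ_pi_singleton v, Measure.pi_pi]
    have h1 : ∀ i : Fin N, ν {v i} = (m : ℝ≥0∞)⁻¹ := by
      intro i
      rw [hνdef, Measure.smul_apply, Measure.count_singleton, smul_eq_mul, mul_one]
    rw [Finset.prod_congr rfl (fun i _ => h1 i), Finset.prod_const, Finset.card_univ,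
      Fintype.card_fin, ← ENNReal.inv_pow]
  have hBsub : ∀ v ∈ B, (fun i => e (v i)) ∈ Bad := by
    intro v hv
    have := (Finset.mem_filter.1 hv).2
    exact this
  have hlow2 : (B.card : ℝ≥0∞) * ((m : ℝ≥0∞) ^ N)⁻¹ ≤ (Measure.pi fun _ : Fin N => μ) Bad := by
    have hb : (Measure.pi fun _ : Fin N => ν) (B : Set (Fin N → Fin m))
        = (B.card : ℝ≥0∞) * ((m : ℝ≥0∞) ^ N)⁻¹ := by
      have hcover : (B : Set (Fin N → Fin m)) = ⋃ v ∈ B, {v} := by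
        ext x; simp
      rw [hcover, measure_biUnion_finset ?hd ?hm]
      · rw [Finset.sum_congr rfl (fun v _ => hsingle v), Finset.sum_const, nsmul_eq_mul]
      case hd =>
        intro a _ b _ hab
        simp [Set.disjoint_singleton, hab]
      case hm =>
        intro v _
        exact measurableSet_singleton v
    calc (B.card : ℝ≥0∞) * ((m : ℝ≥0∞) ^ N)⁻¹
        = (Measure.pi fun _ : Fin N => ν) (B : Set (Fin N → Fin m)) := hb.symm
      _ ≤ (Measure.pi fun _ : Fin N => ν) ((fun v : Fin N → Fin m => fun i => e (v i)) ⁻¹' Bad) :=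
          measure_mono (fun v hv => hBsub v hv)
      _ ≤ (Measure.map (fun v : Fin N → Fin m => fun i => e (v i))
            (Measure.pi fun _ => ν)) Bad :=
          Measure.le_map_apply hMP.measurable.aemeasurable Bad
      _ = (Measure.pi fun _ : Fin N => μ) Bad := by rw [hMP.map_eq]
  -- combine everything
  have hmpow0 : ((m : ℝ≥0∞) ^ N) ≠ 0 := pow_ne_zero N hmE0
  have hmpowT : ((m : ℝ≥0∞) ^ N) ≠ ⊤ := by
    exact ENNReal.pow_ne_top hmET
  have hfin : (8 : ℝ≥0∞)⁻¹ ≤ (B.card : ℝ≥0∞) * ((m : ℝ≥0∞) ^ N)⁻¹ := by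
    have hcast : ((m : ℝ≥0∞) ^ N) ≤ 8 * (B.card : ℝ≥0∞) := by
      have : ((m ^ N : ℕ) : ℝ≥0∞) ≤ ((8 * B.card : ℕ) : ℝ≥0∞) := by exact_mod_cast hmarkovN
      push_cast at this
      exact_mod_cast this
    have h8 : (8 : ℝ≥0∞) ≠ 0 := by norm_num
    have h8T : (8 : ℝ≥0∞) ≠ ⊤ := by norm_num
    calc (8 : ℝ≥0∞)⁻¹ = 8⁻¹ * ((m : ℝ≥0∞) ^ N) * ((m : ℝ≥0∞) ^ N)⁻¹ := by
          rw [mul_assoc, ENNReal.mul_inv_cancel hmpow0 hmpowT, mul_one]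
      _ ≤ 8⁻¹ * (8 * (B.card : ℝ≥0∞)) * ((m : ℝ≥0∞) ^ N)⁻¹ := by
          apply mul_le_mul_left
          exact mul_le_mul_right hcast _
      _ = (B.card : ℝ≥0∞) * ((m : ℝ≥0∞) ^ N)⁻¹ := by
          rw [← mul_assoc, ENNReal.inv_mul_cancel h8 h8T, one_mul]
  have hcontr : (8 : ℝ≥0∞)⁻¹ ≤ ENNReal.ofReal (1/16) :=
    le_trans (le_trans hfin hlow2) hupper
  have : ENNReal.ofReal (1/16) < (8 : ℝ≥0∞)⁻¹ := by
    have h1 : ENNReal.ofReal (1/16) < ENNReal.ofReal (1/8) :=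
      (ENNReal.ofReal_lt_ofReal_iff (by norm_num)).2 (by norm_num)
    have h2 : ENNReal.ofReal (1/8) = (8 : ℝ≥0∞)⁻¹ := by
      rw [one_div, ENNReal.ofReal_inv_of_pos (by norm_num)]
      norm_num
    rwa [h2] at h1
  exact absurd hcontr (not_le.2 this)
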